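/- Let k be an ordered field and G ≠ {0} an ordered abelian group such that the Hahn field k((G)) is not real closed. Then k((G)) is not dense in its real closure. -/

import Mathlib

/-- A linearly ordered field is real closed if every positive element is a square and every
polynomial of odd degree has a root. -/
def IsRealClosedField (R : Type*) [Field R] [LinearOrder R] [IsStrictOrderedRing R] : Prop :=
  (∀ x : R, 0 < x → ∃ y : R, y ^ 2 = x) ∧
    ∀ p : Polynomial R, Odd p.natDegree → ∃ x : R, p.eval x = 0

section Stmt11Aux

variable {k : Type*} [Field k] [LinearOrder k] [IsStrictOrderedRing k] {G : Type*} [AddCommGroup G] [LinearOrder G] [IsOrderedAddMonoid G]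

open HahnSeries

private lemma lead_spec (w : HahnSeries G k) (h : G) (hh : w.coeff h ≠ 0)
    (hmin : ∀ h', h' < h → w.coeff h' = 0) :
    w.order = h ∧ w.leadingCoeff = w.coeff h := by
  have hw : w ≠ 0 := ne_zero_of_coeff_ne_zero hh
  have h1 : w.order ≤ h := order_le_of_coeff_ne_zero hh
  have h2 : ¬ w.order < h := fun hc => (coeff_order_eq_zero.not.mpr hw) (hmin _ hc)
  have he : w.order = h := le_antisymm h1 (not_lt.mp h2)
  exact ⟨he, by rw [leadingCoeff_eq, he]⟩

private lemma single_add' (g : G) (r r' : k) :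
    (single g (r + r') : HahnSeries G k) = single g r + single g r' := by
  ext h
  by_cases hh : h = g
  · subst hh
    rw [HahnSeries.coeff_add, coeff_single_same, coeff_single_same, coeff_single_same]
  · rw [HahnSeries.coeff_add, coeff_single_of_ne hh, coeff_single_of_ne hh,
      coeff_single_of_ne hh, add_zero]

end Stmt11Aux

/-- Let `k` be an ordered field and `G ≠ {0}` an ordered abelian group such that the Hahn
field `k((G))` is not real closed (i.e. its real closure, modelled by a real closed field
`R` with an order-preserving embedding `f` with algebraic image, is a proper extension).
Then `k((G))` is not dense in its real closure. -/
theorem stmt_11 {k : Type*} [Field k] [LinearOrder k] [IsStrictOrderedRing k] {G : Type*} [AddCommGroup G] [LinearOrder G] [IsOrderedAddMonoid G]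
    (hG : ∃ g : G, g ≠ 0)
    {R : Type*} [Field R] [LinearOrder R] [IsStrictOrderedRing R] (hR : IsRealClosedField R)
    (f : HahnSeries G k →+* R)
    (hord : ∀ s t : HahnSeries G k, 0 < (t - s).leadingCoeff → f s < f t)
    (halg : ∀ x : R, ∃ p : Polynomial (HahnSeries G k), p ≠ 0 ∧ p.eval₂ f x = 0)
    (hnotrc : ¬ Function.Surjective f) :
    ∃ a b : R, a < b ∧ ∀ s : HahnSeries G k, f s ∉ Set.Ioo a b := by
  classical
  open HahnSeries in
  rw [Function.Surjective] at hnotrc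
  push_neg at hnotrc
  obtain ⟨x, hx⟩ := hnotrc
  obtain ⟨g₀, hg₀⟩ := hG
  set d : G := |g₀| with hd
  have hdpos : 0 < d := abs_pos.mpr hg₀
  set e : G → R := fun g => f (single g 1) with he
  -- positivity of the scales
  have hepos : ∀ g, 0 < e g := by
    intro g
    have h0 := hord 0 (single g 1) (by rw [sub_zero, leadingCoeff_of_single]; exact one_pos)
    simpa using h0
  -- antitonicity of the scales
  have hemono : ∀ {g g' : G}, g ≤ g' → e g' ≤ e g := by
    intro g g' hgg
    rcases eq_or_lt_of_le hgg with rfl | hlt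
    · exact le_rfl
    · refine le_of_lt (hord _ _ ?_)
      obtain ⟨-, hl⟩ := lead_spec ((single g 1 : HahnSeries G k) - single g' 1) g
        (by simp [hlt.ne]) (fun h' hh' => by simp [hh'.ne, (hh'.trans hlt).ne])
      rw [hl]
      simp [hlt.ne]
  -- values of doubled/quadrupled singles
  have ftwo : ∀ g : G, f (single g (2:k)) = e g + e g := by
    intro g
    rw [show (2:k) = 1 + 1 by norm_num, single_add', f.map_add]
  have ffour : ∀ g : G, f (single g (4:k)) = (e g + e g) + (e g + e g) := by
    intro g
    rw [show (4:k) = 2 + 2 by norm_num, single_add', f.map_add, ftwo]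
  -- lower bound: nonzero series dominate smaller scales
  have key : ∀ (u : HahnSeries G k), u ≠ 0 → 0 < u.leadingCoeff →
      ∀ (g : G) (r : k), u.order < g → f (single g r) < f u := by
    intro u hu hc g r hg
    have h1 : f (single u.order (u.leadingCoeff / 2)) < f u := by
      apply hord
      obtain ⟨-, hl⟩ := lead_spec (u - single u.order (u.leadingCoeff / 2)) u.order
        (by rw [coeff_sub, coeff_single_same, ← leadingCoeff_eq]; exact ne_of_gt (by linarith))
        (fun h' hh' => by
          rw [coeff_sub, coeff_single_of_ne hh'.ne, coeff_eq_zero_of_lt_order hh', sub_zero])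
      rw [hl, coeff_sub, coeff_single_same, ← leadingCoeff_eq]
      linarith
    have h2 : f (single g r) < f (single u.order (u.leadingCoeff / 2)) := by
      apply hord
      obtain ⟨-, hl⟩ := lead_spec
        ((single u.order (u.leadingCoeff / 2) : HahnSeries G k) - single g r) u.order
        (by rw [coeff_sub, coeff_single_same, coeff_single_of_ne hg.ne, sub_zero]; exact ne_of_gt (by linarith))
        (fun h' hh' => by
          rw [coeff_sub, coeff_single_of_ne hh'.ne, coeff_single_of_ne (hh'.trans hg).ne,
            sub_zero])
      rw [hl, coeff_sub, coeff_single_same, coeff_single_of_ne hg.ne, sub_zero]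
      linarith
    exact h2.trans h1
  have low : ∀ (u : HahnSeries G k), u ≠ 0 → ∀ (g : G) (r : k), u.order < g →
      f (single g r) < |f u| := by
    intro u hu g r hg
    rcases lt_or_gt_of_ne (leadingCoeff_ne_zero.mpr hu) with hc | hc
    · -- negative leading coefficient: use -u
      obtain ⟨ho, hl⟩ := lead_spec (-u) u.order
        (by rw [coeff_neg, ← leadingCoeff_eq]; exact neg_ne_zero.mpr (leadingCoeff_ne_zero.mpr hu))
        (fun h' hh' => by rw [coeff_neg, coeff_eq_zero_of_lt_order hh', neg_zero])
      have hcl : 0 < (-u).leadingCoeff := by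
        rw [hl, coeff_neg, ← leadingCoeff_eq]; linarith
      have := key (-u) (neg_ne_zero.mpr hu) hcl g r (by rwa [ho])
      rw [f.map_neg] at this
      exact this.trans_le (neg_le_abs _)
    · exact (key u hu hc g r hg).trans_le (le_abs_self _)
  -- upper bound: series supported above h are below the scale e h
  have up : ∀ (v : HahnSeries G k) (h : G), (∀ h', h' ≤ h → v.coeff h' = 0) → |f v| < e h := by
    intro v h hv
    have h1 : f v < e h := by
      apply hord
      obtain ⟨-, hl⟩ := lead_spec ((single h 1 : HahnSeries G k) - v) h
        (by rw [coeff_sub, coeff_single_same, hv h le_rfl, sub_zero]; exact one_ne_zero)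
        (fun h' hh' => by rw [coeff_sub, coeff_single_of_ne hh'.ne, hv h' hh'.le, sub_zero])
      rw [hl, coeff_sub, coeff_single_same, hv h le_rfl, sub_zero]
      exact one_pos
    have h2 : -e h < f v := by
      have h3 := hord (-(single h 1)) v ?_
      · rw [f.map_neg] at h3; exact h3
      · obtain ⟨-, hl⟩ := lead_spec (v - -(single h 1)) h
          (by rw [sub_neg_eq_add, coeff_add, coeff_single_same, hv h le_rfl, zero_add]
              exact one_ne_zero)
          (fun h' hh' => by
            rw [sub_neg_eq_add, coeff_add, coeff_single_of_ne hh'.ne, hv h' hh'.le, add_zero])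
        rw [hl, sub_neg_eq_add, coeff_add, coeff_single_same, hv h le_rfl, zero_add]
        exact one_pos
    rw [abs_lt]
    exact ⟨h2, h1⟩
  -- agreement of good approximations below the scale
  have agree : ∀ (g1 : G) (s t : HahnSeries G k), |x - f s| < e g1 → |x - f t| < e g1 →
      ∀ h, h < g1 → s.coeff h = t.coeff h := by
    intro g1 s t hs ht h hh
    by_cases hst : s - t = 0
    · have := sub_eq_zero.mp hst
      rw [this]
    · have horder : ¬ (s - t).order < g1 := by
        intro hlt
        have h1 := low (s - t) hst g1 2 hlt
        rw [ftwo] at h1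
        have h2 : |f (s - t)| < e g1 + e g1 := by
          have heq : f (s - t) = (f s - x) + (x - f t) := by rw [f.map_sub]; ring
          calc |f (s - t)| ≤ |f s - x| + |x - f t| := by rw [heq]; exact abs_add_le _ _
            _ = |x - f s| + |x - f t| := by rw [abs_sub_comm]
            _ < e g1 + e g1 := add_lt_add hs ht
        linarith
      have hz := coeff_eq_zero_of_lt_order (lt_of_lt_of_le hh (not_lt.mp horder))
      rw [coeff_sub, sub_eq_zero] at hz
      exact hz
  by_cases hA : ∃ g : G, ∀ s : HahnSeries G k, e g ≤ |x - f s|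
  · -- uniform gap around x
    obtain ⟨g, hg⟩ := hA
    refine ⟨x - e g, x + e g, by linarith [hepos g], fun s hs => ?_⟩
    obtain ⟨h1, h2⟩ := hs
    have h3 : |x - f s| < e g := abs_lt.mpr ⟨by linarith, by linarith⟩
    exact absurd h3 (not_lt.mpr (hg s))
  · push_neg at hA
    choose S hS using hA
    set c : G → k := fun g => (S (g + d)).coeff g with hc
    have hsupp : (Function.support c).IsPWO := by
      rw [Set.isPWO_iff_isWF, Set.isWF_iff_no_descending_seq]
      intro a ha hmem
      have hkey : ∀ n : ℕ, 0 < n → a n ∈ (S (a 0 + d)).support := by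
        intro n hn
        have h1 : a n < a 0 := ha hn
        have h2 : c (a n) = (S (a 0 + d)).coeff (a n) := by
          exact agree (a n + d) (S (a n + d)) (S (a 0 + d)) (hS _)
            (lt_of_lt_of_le (hS _) (hemono (add_le_add_left h1.le d)))
            (a n) (lt_add_of_pos_right _ hdpos)
        rw [mem_support, ← h2]
        exact hmem n
      refine (Set.isWF_iff_no_descending_seq.mp (S (a 0 + d)).isWF_support)
        (fun n => a (n + 1)) (fun m n hmn => ha (by omega)) (fun n => hkey (n + 1) n.succ_pos)
    set y : HahnSeries G k := ⟨c, hsupp⟩ with hy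
    have hyc : ∀ g, y.coeff g = c g := fun g => rfl
    have hyS : ∀ h1 h2 : G, h1 < h2 → y.coeff h1 = (S h2).coeff h1 := by
      intro h1 h2 hlt
      rw [hyc]
      exact agree (min (h1 + d) h2) (S (h1 + d)) (S h2)
        (lt_of_lt_of_le (hS _) (hemono (min_le_left _ _)))
        (lt_of_lt_of_le (hS _) (hemono (min_le_right _ _)))
        h1 (lt_min (lt_add_of_pos_right _ hdpos) hlt)
    have hxy : x - f y ≠ 0 := sub_ne_zero.mpr (fun hcon => hx y hcon.symm)
    set δ := |x - f y| with hδ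
    have hδpos : 0 < δ := abs_pos.mpr hxy
    have hδlt : ∀ h : G, δ < e h + e h := by
      intro h
      have hv : ∀ h', h' ≤ h → (S (h + d) - y).coeff h' = 0 := by
        intro h' hh'
        rw [coeff_sub, ← hyS h' (h + d) (lt_of_le_of_lt hh' (lt_add_of_pos_right _ hdpos)),
          sub_self]
      have h1 : |f (S (h + d)) - f y| < e h := by rw [← f.map_sub]; exact up _ h hv
      calc δ = |(x - f (S (h + d))) + (f (S (h + d)) - f y)| := by rw [hδ]; ring_nf
        _ ≤ |x - f (S (h + d))| + |f (S (h + d)) - f y| := abs_add_le _ _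
        _ < e (h + d) + e h := add_lt_add (hS _) h1
        _ ≤ e h + e h := by
            have := hemono (le_add_of_nonneg_right hdpos.le : h ≤ h + d)
            linarith
    refine ⟨x - δ, x + δ, by linarith, fun s hs => ?_⟩
    obtain ⟨hs1, hs2⟩ := hs
    have habs : |x - f s| < δ := abs_lt.mpr ⟨by linarith, by linarith⟩
    by_cases hsy : s = y
    · rw [hsy, ← hδ] at habs
      exact lt_irrefl _ habs
    · have hu : s - y ≠ 0 := sub_ne_zero.mpr hsy
      have h4 : f (single ((s - y).order + d) (4:k)) < |f (s - y)| :=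
        low (s - y) hu _ 4 (lt_add_of_pos_right _ hdpos)
      rw [ffour] at h4
      have h5 : δ < e ((s - y).order + d) + e ((s - y).order + d) := hδlt _
      have h6 : |f (s - y)| ≤ δ + |x - f s| := by
        have heq : f (s - y) = (x - f y) + (f s - x) := by rw [f.map_sub]; ring
        have h7 := abs_add_le (x - f y) (f s - x)
        rw [← heq, abs_sub_comm (f s) x] at h7
        rw [hδ]
        exact h7
      linarith
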